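/- Let u : ℝ^N_+ → ℝ be continuous and suppose that for every unit vector ν = (ν′, ν_N) with ν_N < 0 and every t > 0, u(x) ≤ u(x + t·ν) for all x with x_N > -t·ν_N. Then for every unit vector ν with ν_N ≤ 0 (allowing ν_N = 0), and all x ∈ ℝ^N_+ and t > 0 with x + t·ν ∈ ℝ^N_+, one has u(x) ≤ u(x + t·ν). In particular u(x′, x_N) = u(y′, x_N) for all x′, y′ ∈ ℝ^{N-1} and x_N > 0. -/
import Mathlib

open Filter Topology

/-- Passage to the limit in the sliding method: monotonicity of `u` along all
strictly downward unit directions extends, by continuity, to horizontal unit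
directions, and forces `u` to be independent of the tangential variables. -/
theorem sliding_limit (n : ℕ) (u : EuclideanSpace ℝ (Fin (n + 1)) → ℝ)
    (hcont : ContinuousOn u {x : EuclideanSpace ℝ (Fin (n + 1)) | 0 < x (Fin.last n)})
    (hslide : ∀ ν : EuclideanSpace ℝ (Fin (n + 1)), ‖ν‖ = 1 → ν (Fin.last n) < 0 →
      ∀ t : ℝ, 0 < t → ∀ x : EuclideanSpace ℝ (Fin (n + 1)),
        -t * ν (Fin.last n) < x (Fin.last n) → u x ≤ u (x + t • ν)) :
    (∀ ν : EuclideanSpace ℝ (Fin (n + 1)), ‖ν‖ = 1 → ν (Fin.last n) ≤ 0 →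
      ∀ t : ℝ, 0 < t → ∀ x : EuclideanSpace ℝ (Fin (n + 1)),
        0 < x (Fin.last n) → 0 < (x + t • ν) (Fin.last n) → u x ≤ u (x + t • ν)) ∧
    (∀ x y : EuclideanSpace ℝ (Fin (n + 1)), 0 < x (Fin.last n) →
      y (Fin.last n) = x (Fin.last n) → u x = u y) := by
  set L := Fin.last n with hLdef
  have hcoord : Continuous fun z : EuclideanSpace ℝ (Fin (n + 1)) => z L :=
    (EuclideanSpace.proj L).continuous
  have hopen : IsOpen {z : EuclideanSpace ℝ (Fin (n + 1)) | 0 < z L} :=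
    isOpen_lt continuous_const hcoord
  have part1 : ∀ ν : EuclideanSpace ℝ (Fin (n + 1)), ‖ν‖ = 1 → ν L ≤ 0 →
      ∀ t : ℝ, 0 < t → ∀ x : EuclideanSpace ℝ (Fin (n + 1)),
        0 < x L → 0 < (x + t • ν) L → u x ≤ u (x + t • ν) := by
    intro ν hν hνL t ht x hx hxt
    have haddL : (x + t • ν) L = x L + t * ν L := rfl
    rcases lt_or_eq_of_le hνL with hlt | heq
    · exact hslide ν hν hlt t ht x (by rw [haddL] at hxt; linarith)
    · -- ν L = 0 : horizontal direction
      set e : EuclideanSpace ℝ (Fin (n + 1)) := EuclideanSpace.single L 1 with hedef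
      have heL : e L = 1 := by simp [hedef]
      have key : ∀ s ∈ Set.Ioo (0 : ℝ) (x L), u x ≤ u (x + t • ν - s • e) := by
        intro s hs
        set w : EuclideanSpace ℝ (Fin (n + 1)) := t • ν - s • e with hwdef
        have hwL : w L = -s := by
          have : w L = t * ν L - s * e L := rfl
          rw [this, heq, heL]; ring
        have hw0 : w ≠ 0 := by
          intro h
          rw [h] at hwL
          have : (0 : EuclideanSpace ℝ (Fin (n + 1))) L = 0 := rfl
          rw [this] at hwL
          linarith [hs.1]
        have hwn : 0 < ‖w‖ := norm_pos_iff.mpr hw0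
        have hμL' : (‖w‖⁻¹ • w) L = ‖w‖⁻¹ * (-s) := by
          have : (‖w‖⁻¹ • w) L = ‖w‖⁻¹ * w L := rfl
          rw [this, hwL]
        have hμ : ‖(‖w‖⁻¹ • w)‖ = 1 := by
          rw [norm_smul, norm_inv, norm_norm]
          field_simp
        have hμL : (‖w‖⁻¹ • w) L < 0 := by
          rw [hμL']
          exact mul_neg_of_pos_of_neg (inv_pos.mpr hwn) (by linarith [hs.1])
        have hcondval : -‖w‖ * ((‖w‖⁻¹ • w) L) = s := by
          rw [hμL']
          field_simp
        have h := hslide _ hμ hμL ‖w‖ hwn x (by rw [hcondval]; exact hs.2)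
        rw [smul_inv_smul₀ hwn.ne'] at h
        rwa [hwdef, ← add_sub_assoc] at h
      have hat : ContinuousAt u (x + t • ν) := hcont.continuousAt (hopen.mem_nhds hxt)
      have hmap : Continuous fun s : ℝ => x + t • ν - s • e :=
        continuous_const.sub (continuous_id.smul continuous_const)
      have h0 : Tendsto (fun s : ℝ => x + t • ν - s • e) (𝓝[>] 0) (𝓝 (x + t • ν)) := by
        have := hmap.tendsto 0
        simp only [zero_smul, sub_zero] at this
        exact this.mono_left nhdsWithin_le_nhds
      have htend : Tendsto (fun s : ℝ => u (x + t • ν - s • e)) (𝓝[>] 0)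
          (𝓝 (u (x + t • ν))) := hat.tendsto.comp h0
      refine ge_of_tendsto htend ?_
      filter_upwards [Ioo_mem_nhdsGT_of_mem (Set.mem_Ico.mpr ⟨le_refl 0, hx⟩)] with s hs
      exact key s hs
  refine ⟨part1, ?_⟩
  intro x y hx hxy
  rcases eq_or_ne x y with rfl | hne
  · rfl
  have hd : y - x ≠ 0 := sub_ne_zero.mpr (Ne.symm hne)
  have ht : 0 < ‖y - x‖ := norm_pos_iff.mpr hd
  set t : ℝ := ‖y - x‖ with htdef
  set ν : EuclideanSpace ℝ (Fin (n + 1)) := t⁻¹ • (y - x) with hνdef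
  have hν : ‖ν‖ = 1 := by
    rw [hνdef, norm_smul, norm_inv, norm_norm, ← htdef]
    field_simp
  have hνL : ν L = 0 := by
    have : ν L = t⁻¹ * (y L - x L) := rfl
    rw [this, hxy]; ring
  have hxν : x + t • ν = y := by
    rw [hνdef, smul_inv_smul₀ ht.ne']
    abel
  have hyL : 0 < y L := by rw [hxy]; exact hx
  have h1 := part1 ν hν hνL.le t ht x hx (by rw [hxν]; exact hyL)
  rw [hxν] at h1
  have hν' : ‖-ν‖ = 1 := by rw [norm_neg]; exact hν
  have hνL' : (-ν) L ≤ 0 := by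
    have : (-ν) L = -(ν L) := rfl
    rw [this, hνL]; norm_num
  have hyν : y + t • (-ν) = x := by
    rw [smul_neg, hνdef, smul_inv_smul₀ ht.ne']
    abel
  have h2 := part1 (-ν) hν' hνL' t ht y hyL (by rw [hyν]; exact hx)
  rw [hyν] at h2
  exact le_antisymm h1 h2
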